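/- arXiv:2010.14636 — 2 statements merged into one kernel-verified Lean document; each statement's English description precedes it below -/
import Mathlib

section
/- Fix t > 1 and let m ≥ m(x) and n ≥ n(x) for a word x in Γ, where m(x) = max_i {−(α_i(x)+w_i(x))} (at least 0) and n(x) is the largest index t such that t or t̄ appears in x. Define [x]_{m,n} = (1̄^m ⋯ n̄^m)(n^{β_n} n̄^{α_n(x)} ⋯ 1^{β_1} 1̄^{α_1(x)}) where β_i = α_i(x) + w_i(x) + m. Then w([x]_{m,n}) = w(x) and α([x]_{m,n}) = α(x); consequently u_x and u_{[x]_{m,n}} act identically on all partitions. -/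
/-- Alphabet Γ = ℕ ∪ ℕ̄ : a letter is `(false, i)` for unbarred `i` (up-operator)
and `(true, i)` for barred `ī` (down-operator); indices of interest are `i ≥ 1`. -/
abbrev Γ : Type := Bool × ℕ

/-- `c : ℕ → ℕ` records the column lengths `λ'_i` (for `i ≥ 1`) of a partition:
nonincreasing, eventually zero; `c 0 = 0` is a normalization. -/
def IsPartition (c : ℕ → ℕ) : Prop :=
  (∀ i, 1 ≤ i → c (i + 1) ≤ c i) ∧ c 0 = 0 ∧ ∃ N, ∀ i, N ≤ i → c i = 0

open scoped Classical in
/-- The up-operator `u_i`: add a box to column `i` if the result is a partition, else `0` (`none`). -/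
noncomputable def upFun (i : ℕ) (c : ℕ → ℕ) : Option (ℕ → ℕ) :=
  if 1 ≤ i ∧ IsPartition (Function.update c i (c i + 1)) then
    some (Function.update c i (c i + 1)) else none

open scoped Classical in
/-- The down-operator `d_i`: remove a box from column `i` if the result is a partition, else `0`. -/
noncomputable def downFun (i : ℕ) (c : ℕ → ℕ) : Option (ℕ → ℕ) :=
  if 1 ≤ i ∧ 1 ≤ c i ∧ IsPartition (Function.update c i (c i - 1)) then
    some (Function.update c i (c i - 1)) else none

/-- `u_i` extended to `0` (operators applied to `0` give `0`). -/
noncomputable def U (i : ℕ) (o : Option (ℕ → ℕ)) : Option (ℕ → ℕ) := o.bind (upFun i)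

/-- `d_i` extended to `0`. -/
noncomputable def D (i : ℕ) (o : Option (ℕ → ℕ)) : Option (ℕ → ℕ) := o.bind (downFun i)

/-- The action `u_x` of a word `x` on (possibly zero) partitions, rightmost letter acting first. -/
noncomputable def act (x : List Γ) (o : Option (ℕ → ℕ)) : Option (ℕ → ℕ) :=
  x.foldr (fun l o => if l.1 then D l.2 o else U l.2 o) o

/-- The weight `w_j(x)`: occurrences of `j` minus occurrences of `j̄` in `x`. -/
def wt (j : ℕ) (x : List Γ) : ℤ :=
  (x.count ((false, j) : Γ) : ℤ) - (x.count ((true, j) : Γ) : ℤ)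

/-- `α_i(x)`: the maximum of `w_{i+1}(x̃) - w_i(x̃)` over all suffix subwords `x̃` of `x`
(including the empty suffix, which contributes `0`). -/
def alphaV (i : ℕ) (x : List Γ) : ℤ :=
  (x.tails.map (fun s => wt (i + 1) s - wt i s)).foldr max 0

/-- The representative word `[x]_{m,n} = (1̄^m ⋯ n̄^m)(n^{β_n} n̄^{α_n} ⋯ 1^{β_1} 1̄^{α_1})`
where `β_i = α_i(x) + w_i(x) + m`. -/
noncomputable def rep (x : List Γ) (m n : ℕ) : List Γ :=
  ((List.range n).map (fun k => List.replicate m ((true, k + 1) : Γ))).flatten ++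
  ((List.range n).reverse.map (fun k =>
      List.replicate ((alphaV (k + 1) x + wt (k + 1) x + m).toNat) ((false, k + 1) : Γ) ++
      List.replicate ((alphaV (k + 1) x).toNat) ((true, k + 1) : Γ))).flatten




/-- the suffix functional -/
def fw (i : ℕ) (s : List Γ) : ℤ := wt (i+1) s - wt i s

lemma wt_nil (j : ℕ) : wt j [] = 0 := by simp [wt]

lemma wt_append (j : ℕ) (a b : List Γ) : wt j (a ++ b) = wt j a + wt j b := by
  simp [wt, List.count_append]; ring

lemma wt_cons (j : ℕ) (l : Γ) (y : List Γ) :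
    wt j (l :: y) = (if l = (false, j) then 1 else 0) - (if l = (true, j) then 1 else 0) + wt j y := by
  simp [wt, List.count_cons]
  split <;> split <;> simp_all <;> ring

lemma wt_replicate (j : ℕ) (k : ℕ) (l : Γ) :
    wt j (List.replicate k l) =
      (if l = (false, j) then (k:ℤ) else 0) - (if l = (true, j) then (k:ℤ) else 0) := by
  simp only [wt, List.count_replicate]
  split <;> split <;> simp_all

lemma wt_eq_zero_of_not_mem (j : ℕ) (x : List Γ) (h : ∀ l ∈ x, l.2 ≠ j) : wt j x = 0 := by
  have h1 : x.count ((false, j) : Γ) = 0 := by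
    rw [List.count_eq_zero]; intro hmem; exact h _ hmem rfl
  have h2 : x.count ((true, j) : Γ) = 0 := by
    rw [List.count_eq_zero]; intro hmem; exact h _ hmem rfl
  simp [wt, h1, h2]

lemma alphaV_nil (i : ℕ) : alphaV i [] = 0 := by simp [alphaV, wt_nil]

lemma alphaV_cons (i : ℕ) (l : Γ) (y : List Γ) :
    alphaV i (l :: y) = max (fw i (l :: y)) (alphaV i y) := by
  simp [alphaV, List.tails_cons, fw]

lemma alphaV_nonneg (i : ℕ) (x : List Γ) : 0 ≤ alphaV i x := by
  induction x with
  | nil => simp [alphaV_nil]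
  | cons l y ih => rw [alphaV_cons]; exact le_trans ih (le_max_right _ _)

lemma fw_le_alphaV (i : ℕ) (x : List Γ) : fw i x ≤ alphaV i x := by
  cases x with
  | nil => simp [fw, wt_nil, alphaV_nil]
  | cons l y => rw [alphaV_cons]; exact le_max_left _ _

lemma alphaV_le (i : ℕ) (l : Γ) (y : List Γ) : alphaV i y ≤ alphaV i (l :: y) := by
  rw [alphaV_cons]; exact le_max_right _ _

/-- removing letters with index ∉ {i, i+1} changes neither `fw` … -/
lemma wt_filter (j : ℕ) (p : Γ → Bool) (x : List Γ)
    (hp : ∀ b : Bool, p (b, j) = true) :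
    wt j (x.filter p) = wt j x := by
  induction x with
  | nil => simp
  | cons l y ih =>
    rw [wt_cons]
    by_cases hl : p l = true
    · rw [List.filter_cons_of_pos hl, wt_cons, ih]
    · rw [List.filter_cons_of_neg (by simpa using hl), ih]
      have h1 : l ≠ (false, j) := fun h => by subst h; simp [hp] at hl
      have h2 : l ≠ (true, j) := fun h => by subst h; simp [hp] at hl
      simp [h1, h2]

lemma alphaV_filter (i : ℕ) (x : List Γ) :
    alphaV i (x.filter (fun l => l.2 = i || l.2 = i+1)) = alphaV i x := by
  set p : Γ → Bool := fun l => l.2 = i || l.2 = i+1 with hp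
  have hpi : ∀ b : Bool, p (b, i) = true := by intro b; simp [hp]
  have hpi1 : ∀ b : Bool, p (b, i+1) = true := by intro b; simp [hp]
  have hfw : ∀ y : List Γ, fw i (y.filter p) = fw i y := by
    intro y; simp [fw, wt_filter i p y hpi, wt_filter (i+1) p y hpi1]
  induction x with
  | nil => simp
  | cons l y ih =>
    by_cases hl : p l = true
    · rw [List.filter_cons_of_pos hl, alphaV_cons, alphaV_cons, ih]
      have : fw i (l :: y.filter p) = fw i (l :: y) := by
        have := hfw (l :: y)
        rwa [List.filter_cons_of_pos hl] at this
      rw [this]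
    · rw [List.filter_cons_of_neg (by simpa using hl), alphaV_cons, ih]
      have h1 : l ≠ (false, i) := fun h => by subst h; simp [hpi] at hl
      have h2 : l ≠ (true, i) := fun h => by subst h; simp [hpi] at hl
      have h3 : l ≠ (false, i+1) := fun h => by subst h; simp [hpi1] at hl
      have h4 : l ≠ (true, i+1) := fun h => by subst h; simp [hpi1] at hl
      have : fw i (l :: y) = fw i y := by
        simp [fw, wt_cons, h1, h2, h3, h4]
      rw [this]
      exact (max_eq_right (fw_le_alphaV i y)).symm

lemma alphaV_eq_zero_of_not_mem (i : ℕ) (x : List Γ) (h : ∀ l ∈ x, l.2 ≠ i ∧ l.2 ≠ i+1) :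
    alphaV i x = 0 := by
  rw [← alphaV_filter]
  have : x.filter (fun l => l.2 = i || l.2 = i+1) = [] := by
    rw [List.filter_eq_nil_iff]
    intro l hl
    simp [(h l hl).1, (h l hl).2]
  rw [this, alphaV_nil]

lemma fw_cons (i : ℕ) (l : Γ) (y : List Γ) : fw i (l :: y) = fw i [l] + fw i y := by
  simp [fw, wt_cons, wt_nil]; ring

lemma fw_append (i : ℕ) (a b : List Γ) : fw i (a ++ b) = fw i a + fw i b := by
  simp [fw, wt_append]; ring

lemma fw_replicate (i : ℕ) (k : ℕ) (l : Γ) :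
    fw i (List.replicate k l) = k * fw i [l] := by
  induction k with
  | zero => simp [fw, wt_nil]
  | succ k ih =>
    rw [List.replicate_succ, fw_cons, ih]
    push_cast; ring

/-- prepending a block of `k` letters each with `fw`-value `1`. -/
lemma alphaV_replicate_append_pos (i : ℕ) (k : ℕ) (l : Γ) (y : List Γ)
    (hl : fw i [l] = 1) :
    alphaV i (List.replicate k l ++ y) = max ((k : ℤ) + fw i y) (alphaV i y) := by
  induction k with
  | zero => simp; exact fw_le_alphaV i y
  | succ k ih =>
    rw [List.replicate_succ, List.cons_append, alphaV_cons, ih, fw_cons, fw_append,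
      fw_replicate, hl]
    push_cast
    rcases le_total (alphaV i y) ((k:ℤ) + 1 + fw i y) with h | h
    · rw [max_eq_left h, max_eq_left (max_le (by linarith) (by linarith))]
      ring
    · rw [max_eq_right h, max_eq_right (by linarith : (k:ℤ) + fw i y ≤ alphaV i y),
        max_eq_right (by linarith)]

/-- prepending a block of letters with nonpositive `fw`-value leaves `alphaV` unchanged. -/
lemma alphaV_replicate_append_nonpos (i : ℕ) (k : ℕ) (l : Γ) (y : List Γ)
    (hl : fw i [l] ≤ 0) :
    alphaV i (List.replicate k l ++ y) = alphaV i y := by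
  induction k with
  | zero => simp
  | succ k ih =>
    rw [List.replicate_succ, List.cons_append, alphaV_cons, ih, fw_cons, fw_append,
      fw_replicate]
    have h1 : fw i [l] + ((k:ℤ) * fw i [l] + fw i y) ≤ alphaV i y := by
      have := fw_le_alphaV i y
      have hk : (k:ℤ) * fw i [l] ≤ 0 := mul_nonpos_of_nonneg_of_nonpos (by positivity) hl
      linarith
    exact max_eq_right h1

/-- flatten of a map over `range n` with a single nonempty entry. -/
lemma join_single (G : ℕ → List Γ) (n k0 : ℕ) (hk : k0 < n)
    (h : ∀ k < n, k ≠ k0 → G k = []) :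
    ((List.range n).map G).flatten = G k0 := by
  induction n with
  | zero => omega
  | succ n ih =>
    rw [List.range_succ, List.map_append, List.flatten_append]
    by_cases hk0 : k0 = n
    · subst hk0
      have : ((List.range k0).map G).flatten = [] := by
        rw [List.flatten_eq_nil_iff]
        intro L hL
        simp only [List.mem_map, List.mem_range] at hL
        obtain ⟨k, hk, rfl⟩ := hL
        exact h k (by omega) (by omega)
      simp [this]
    · have : G n = [] := h n (by omega) (by omega)
      rw [ih (by omega) (fun k hk hne => h k (by omega) hne)]
      simp [this]

lemma join_pair (G : ℕ → List Γ) (n k0 k1 : ℕ) (hk01 : k0 < k1) (hk : k1 < n)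
    (h : ∀ k < n, k ≠ k0 → k ≠ k1 → G k = []) :
    ((List.range n).map G).flatten = G k0 ++ G k1 := by
  induction n with
  | zero => omega
  | succ n ih =>
    rw [List.range_succ, List.map_append, List.flatten_append]
    by_cases hk1 : k1 = n
    · subst hk1
      have : ((List.range k1).map G).flatten = G k0 := by
        apply join_single G k1 k0 hk01
        intro k hk hne
        exact h k (by omega) hne (by omega)
      simp [this]
    · have : G n = [] := h n (by omega) (by omega) (by omega)
      rw [ih (by omega) (fun k hk h0 h1 => h k (by omega) h0 h1)]
      simp [this]

lemma join_single_rev (G : ℕ → List Γ) (n k0 : ℕ) (hk : k0 < n)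
    (h : ∀ k < n, k ≠ k0 → G k = []) :
    ((List.range n).reverse.map G).flatten = G k0 := by
  induction n with
  | zero => omega
  | succ n ih =>
    rw [List.range_succ, List.reverse_append]
    simp only [List.reverse_cons, List.reverse_nil, List.nil_append, List.singleton_append,
      List.map_cons, List.flatten_cons]
    by_cases hk0 : k0 = n
    · subst hk0
      have : ((List.range k0).reverse.map G).flatten = [] := by
        rw [List.flatten_eq_nil_iff]
        intro L hL
        simp only [List.mem_map, List.mem_reverse, List.mem_range] at hL
        obtain ⟨k, hk, rfl⟩ := hL
        exact h k (by omega) (by omega)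
      rw [this]; simp
    · have : G n = [] := h n (by omega) (by omega)
      rw [ih (by omega) (fun k hk hne => h k (by omega) hne)]
      simp [this]

lemma join_pair_rev (G : ℕ → List Γ) (n k0 k1 : ℕ) (hk01 : k0 < k1) (hk : k1 < n)
    (h : ∀ k < n, k ≠ k0 → k ≠ k1 → G k = []) :
    ((List.range n).reverse.map G).flatten = G k1 ++ G k0 := by
  induction n with
  | zero => omega
  | succ n ih =>
    rw [List.range_succ, List.reverse_append]
    simp only [List.reverse_cons, List.reverse_nil, List.nil_append, List.singleton_append,
      List.map_cons, List.flatten_cons]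
    by_cases hk1 : k1 = n
    · subst hk1
      have : ((List.range k1).reverse.map G).flatten = G k0 := by
        apply join_single_rev G k1 k0 hk01
        intro k hk hne
        exact h k (by omega) hne (by omega)
      rw [this]
    · have : G n = [] := h n (by omega) (by omega) (by omega)
      rw [ih (by omega) (fun k hk h0 h1 => h k (by omega) h0 h1)]
      simp [this]

lemma join_nil_all (G : ℕ → List Γ) (n : ℕ) (h : ∀ k < n, G k = []) :
    ((List.range n).map G).flatten = [] := by
  rw [List.flatten_eq_nil_iff]
  intro L hL
  simp only [List.mem_map, List.mem_range] at hL
  obtain ⟨k, hk, rfl⟩ := hL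
  exact h k hk

lemma join_nil_all_rev (G : ℕ → List Γ) (n : ℕ) (h : ∀ k < n, G k = []) :
    ((List.range n).reverse.map G).flatten = [] := by
  rw [List.flatten_eq_nil_iff]
  intro L hL
  simp only [List.mem_map, List.mem_reverse, List.mem_range] at hL
  obtain ⟨k, hk, rfl⟩ := hL
  exact h k hk


section RepSpec

variable (x : List Γ) (m n : ℕ)

/-- filtered form of `rep`, case `i + 1 ≤ n`. -/
lemma rep_filter_lt (i : ℕ) (hi : 1 ≤ i) (hin : i + 1 ≤ n) :
    (rep x m n).filter (fun l => l.2 = i || l.2 = i + 1) =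
      List.replicate m ((true, i) : Γ) ++
      (List.replicate m ((true, i + 1) : Γ) ++
      (List.replicate ((alphaV (i+1) x + wt (i+1) x + m).toNat) ((false, i+1) : Γ) ++
      (List.replicate ((alphaV (i+1) x).toNat) ((true, i+1) : Γ) ++
      (List.replicate ((alphaV i x + wt i x + m).toNat) ((false, i) : Γ) ++
       List.replicate ((alphaV i x).toNat) ((true, i) : Γ))))) := by
  set p : Γ → Bool := fun l => l.2 = i || l.2 = i + 1 with hp
  rw [show rep x m n =
      (((List.range n).map (fun k => List.replicate m ((true, k + 1) : Γ))).flatten) ++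
      (((List.range n).reverse.map (fun k =>
        List.replicate ((alphaV (k + 1) x + wt (k + 1) x + m).toNat) ((false, k + 1) : Γ) ++
        List.replicate ((alphaV (k + 1) x).toNat) ((true, k + 1) : Γ))).flatten) from rfl,
    List.filter_append]
  have hA : (((List.range n).map (fun k => List.replicate m ((true, k + 1) : Γ))).flatten).filter p
      = List.replicate m ((true, i) : Γ) ++ List.replicate m ((true, i + 1) : Γ) := by
    rw [List.filter_flatten, List.map_map]
    have := join_pair (fun k => (List.replicate m ((true, k + 1) : Γ)).filter p) n (i-1) i
      (by omega) (by omega) ?_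
    · simp only [Function.comp_def]
      rw [this]
      congr 1
      · rw [show i - 1 + 1 = i by omega]
        rw [List.filter_replicate, if_pos (by simp [hp])]
      · rw [List.filter_replicate, if_pos (by simp [hp])]
    · intro k hk h0 h1
      rw [List.filter_replicate, if_neg (by simp [hp]; omega)]
  have hB : (((List.range n).reverse.map (fun k =>
      List.replicate ((alphaV (k + 1) x + wt (k + 1) x + m).toNat) ((false, k + 1) : Γ) ++
      List.replicate ((alphaV (k + 1) x).toNat) ((true, k + 1) : Γ))).flatten).filter p
      = (List.replicate ((alphaV (i+1) x + wt (i+1) x + m).toNat) ((false, i+1) : Γ) ++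
         List.replicate ((alphaV (i+1) x).toNat) ((true, i+1) : Γ)) ++
        (List.replicate ((alphaV i x + wt i x + m).toNat) ((false, i) : Γ) ++
         List.replicate ((alphaV i x).toNat) ((true, i) : Γ)) := by
    rw [List.filter_flatten, List.map_map]
    have := join_pair_rev (fun k =>
      ((List.replicate ((alphaV (k + 1) x + wt (k + 1) x + m).toNat) ((false, k + 1) : Γ) ++
        List.replicate ((alphaV (k + 1) x).toNat) ((true, k + 1) : Γ)).filter p)) n (i-1) i
      (by omega) (by omega) ?_
    · simp only [Function.comp_def]
      rw [this]
      congr 1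
      · rw [List.filter_append, List.filter_replicate, List.filter_replicate,
          if_pos (by simp [hp]), if_pos (by simp [hp])]
      · rw [show i - 1 + 1 = i by omega, List.filter_append, List.filter_replicate,
          List.filter_replicate, if_pos (by simp [hp]), if_pos (by simp [hp])]
    · intro k hk h0 h1
      rw [List.filter_append, List.filter_replicate, List.filter_replicate,
        if_neg (by simp [hp]; omega), if_neg (by simp [hp]; omega)]
      rfl
  rw [hA, hB]
  simp only [List.append_assoc]

/-- filtered form of `rep`, case `i = n`. -/
lemma rep_filter_eq (hn1 : 1 ≤ n) :
    (rep x m n).filter (fun l => l.2 = n || l.2 = n + 1) =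
      List.replicate m ((true, n) : Γ) ++
      (List.replicate ((alphaV n x + wt n x + m).toNat) ((false, n) : Γ) ++
       List.replicate ((alphaV n x).toNat) ((true, n) : Γ)) := by
  set p : Γ → Bool := fun l => l.2 = n || l.2 = n + 1 with hp
  rw [show rep x m n =
      (((List.range n).map (fun k => List.replicate m ((true, k + 1) : Γ))).flatten) ++
      (((List.range n).reverse.map (fun k =>
        List.replicate ((alphaV (k + 1) x + wt (k + 1) x + m).toNat) ((false, k + 1) : Γ) ++
        List.replicate ((alphaV (k + 1) x).toNat) ((true, k + 1) : Γ))).flatten) from rfl,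
    List.filter_append]
  have hA : (((List.range n).map (fun k => List.replicate m ((true, k + 1) : Γ))).flatten).filter p
      = List.replicate m ((true, n) : Γ) := by
    rw [List.filter_flatten, List.map_map]
    have := join_single (fun k => (List.replicate m ((true, k + 1) : Γ)).filter p) n (n-1)
      (by omega) ?_
    · simp only [Function.comp_def]
      rw [this]
      rw [show n - 1 + 1 = n by omega]
      rw [List.filter_replicate, if_pos (by simp [hp])]
    · intro k hk h0
      rw [List.filter_replicate, if_neg (by simp [hp]; omega)]
  have hB : (((List.range n).reverse.map (fun k =>
      List.replicate ((alphaV (k + 1) x + wt (k + 1) x + m).toNat) ((false, k + 1) : Γ) ++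
      List.replicate ((alphaV (k + 1) x).toNat) ((true, k + 1) : Γ))).flatten).filter p
      = List.replicate ((alphaV n x + wt n x + m).toNat) ((false, n) : Γ) ++
        List.replicate ((alphaV n x).toNat) ((true, n) : Γ) := by
    rw [List.filter_flatten, List.map_map]
    have := join_single_rev (fun k =>
      ((List.replicate ((alphaV (k + 1) x + wt (k + 1) x + m).toNat) ((false, k + 1) : Γ) ++
        List.replicate ((alphaV (k + 1) x).toNat) ((true, k + 1) : Γ)).filter p)) n (n-1)
      (by omega) ?_
    · simp only [Function.comp_def]
      rw [this]
      rw [show n - 1 + 1 = n by omega, List.filter_append, List.filter_replicate,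
        List.filter_replicate, if_pos (by simp [hp]), if_pos (by simp [hp])]
    · intro k hk h0
      rw [List.filter_append, List.filter_replicate, List.filter_replicate,
        if_neg (by simp [hp]; omega), if_neg (by simp [hp]; omega)]
      rfl
  rw [hA, hB]

/-- filtered form of `rep`, case `n < i`. -/
lemma rep_filter_gt (i : ℕ) (hi : n < i) :
    (rep x m n).filter (fun l => l.2 = i || l.2 = i + 1) = [] := by
  set p : Γ → Bool := fun l => l.2 = i || l.2 = i + 1 with hp
  rw [show rep x m n =
      (((List.range n).map (fun k => List.replicate m ((true, k + 1) : Γ))).flatten) ++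
      (((List.range n).reverse.map (fun k =>
        List.replicate ((alphaV (k + 1) x + wt (k + 1) x + m).toNat) ((false, k + 1) : Γ) ++
        List.replicate ((alphaV (k + 1) x).toNat) ((true, k + 1) : Γ))).flatten) from rfl,
    List.filter_append]
  rw [List.filter_flatten, List.map_map, List.filter_flatten, List.map_map]
  rw [join_nil_all _ n ?_, join_nil_all_rev _ n ?_]
  · rfl
  · intro k hk
    dsimp only [Function.comp_def]
    rw [List.filter_append, List.filter_replicate, List.filter_replicate,
      if_neg (by simp [hp]; omega), if_neg (by simp [hp]; omega)]
    rfl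
  · intro k hk
    dsimp only [Function.comp_def]
    rw [List.filter_replicate, if_neg (by simp [hp]; omega)]

lemma fw_nil (i : ℕ) : fw i [] = 0 := by simp [fw, wt_nil]

lemma fw_bar_self (i : ℕ) : fw i [((true, i) : Γ)] = 1 := by
  simp [fw, wt]
lemma fw_unbar_self (i : ℕ) : fw i [((false, i) : Γ)] = -1 := by
  simp [fw, wt]
lemma fw_bar_succ (i : ℕ) : fw i [((true, i+1) : Γ)] = -1 := by
  simp [fw, wt, List.count_singleton]
lemma fw_unbar_succ (i : ℕ) : fw i [((false, i+1) : Γ)] = 1 := by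
  simp [fw, wt, List.count_singleton]

lemma rep_spec (hm : ∀ i, 1 ≤ i → -(alphaV i x + wt i x) ≤ (m : ℤ))
    (hn : ∀ l ∈ x, l.2 ≤ n) (i : ℕ) (hi : 1 ≤ i) :
    wt i (rep x m n) = wt i x ∧ alphaV i (rep x m n) = alphaV i x := by
  have hwf : wt i (rep x m n) = wt i ((rep x m n).filter (fun l => l.2 = i || l.2 = i + 1)) :=
    (wt_filter i _ _ (by intro b; simp)).symm
  have haf : alphaV i (rep x m n) = alphaV i ((rep x m n).filter (fun l => l.2 = i || l.2 = i + 1)) :=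
    (alphaV_filter i _).symm
  have hA : 0 ≤ alphaV i x := alphaV_nonneg i x
  have hwx1 : i = n → wt (i+1) x = 0 := by
    intro h; subst h
    exact wt_eq_zero_of_not_mem _ _ (fun l hl => by have := hn l hl; omega)
  rcases lt_trichotomy i n with hlt | heq | hgt
  · -- i + 1 ≤ n
    have hA1 : 0 ≤ alphaV (i+1) x := alphaV_nonneg (i+1) x
    have hB : 0 ≤ alphaV i x + wt i x + m := by have := hm i hi; linarith
    have hB1 : 0 ≤ alphaV (i+1) x + wt (i+1) x + m := by have := hm (i+1) (by omega); linarith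
    rw [rep_filter_lt x m n i hi (by omega)] at hwf haf
    constructor
    · rw [hwf]
      simp only [wt_append, wt_replicate, Prod.ext_iff]
      simp
      omega
    · rw [haf]
      set A := alphaV i x with hAdef
      set W := wt i x with hWdef
      set A1 := alphaV (i+1) x with hA1def
      set W1 := wt (i+1) x with hW1def
      have hfwx : W1 - W ≤ A := fw_le_alphaV i x
      have h6 : alphaV i (List.replicate A.toNat ((true, i) : Γ)) = A := by
        rw [← List.append_nil (List.replicate A.toNat ((true, i) : Γ)),
          alphaV_replicate_append_pos i _ _ _ (fw_bar_self i), fw_nil, alphaV_nil]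
        rw [Int.toNat_of_nonneg hA]
        omega
      have h56 : alphaV i (List.replicate (A + W + m).toNat ((false, i) : Γ) ++
          List.replicate A.toNat ((true, i) : Γ)) = A := by
        rw [alphaV_replicate_append_nonpos i _ _ _ (by rw [fw_unbar_self]; omega), h6]
      have hfw56 : fw i (List.replicate (A + W + m).toNat ((false, i) : Γ) ++
          List.replicate A.toNat ((true, i) : Γ)) = -W - m := by
        rw [fw_append, fw_replicate, fw_replicate, fw_unbar_self, fw_bar_self,
          Int.toNat_of_nonneg hB, Int.toNat_of_nonneg hA]
        ring
      have h456 : alphaV i (List.replicate A1.toNat ((true, i+1) : Γ) ++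
          (List.replicate (A + W + m).toNat ((false, i) : Γ) ++
           List.replicate A.toNat ((true, i) : Γ))) = A := by
        rw [alphaV_replicate_append_nonpos i _ _ _ (by rw [fw_bar_succ]; omega), h56]
      have hfw456 : fw i (List.replicate A1.toNat ((true, i+1) : Γ) ++
          (List.replicate (A + W + m).toNat ((false, i) : Γ) ++
           List.replicate A.toNat ((true, i) : Γ))) = -A1 - W - m := by
        rw [fw_append, fw_replicate, fw_bar_succ, hfw56, Int.toNat_of_nonneg hA1]
        ring
      have h3456 : alphaV i (List.replicate (A1 + W1 + m).toNat ((false, i+1) : Γ) ++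
          (List.replicate A1.toNat ((true, i+1) : Γ) ++
          (List.replicate (A + W + m).toNat ((false, i) : Γ) ++
           List.replicate A.toNat ((true, i) : Γ)))) = A := by
        rw [alphaV_replicate_append_pos i _ _ _ (fw_unbar_succ i), h456, hfw456,
          Int.toNat_of_nonneg hB1]
        have : A1 + W1 + ↑m + (-A1 - W - ↑m) = W1 - W := by ring
        rw [this, max_eq_right hfwx]
      have hfw3456 : fw i (List.replicate (A1 + W1 + m).toNat ((false, i+1) : Γ) ++
          (List.replicate A1.toNat ((true, i+1) : Γ) ++
          (List.replicate (A + W + m).toNat ((false, i) : Γ) ++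
           List.replicate A.toNat ((true, i) : Γ)))) = W1 - W := by
        rw [fw_append, fw_replicate, fw_unbar_succ, hfw456, Int.toNat_of_nonneg hB1]
        ring
      have h23456 : alphaV i (List.replicate m ((true, i+1) : Γ) ++
          (List.replicate (A1 + W1 + m).toNat ((false, i+1) : Γ) ++
          (List.replicate A1.toNat ((true, i+1) : Γ) ++
          (List.replicate (A + W + m).toNat ((false, i) : Γ) ++
           List.replicate A.toNat ((true, i) : Γ))))) = A := by
        rw [alphaV_replicate_append_nonpos i _ _ _ (by rw [fw_bar_succ]; omega), h3456]
      have hfw23456 : fw i (List.replicate m ((true, i+1) : Γ) ++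
          (List.replicate (A1 + W1 + m).toNat ((false, i+1) : Γ) ++
          (List.replicate A1.toNat ((true, i+1) : Γ) ++
          (List.replicate (A + W + m).toNat ((false, i) : Γ) ++
           List.replicate A.toNat ((true, i) : Γ))))) = W1 - W - m := by
        rw [fw_append, fw_replicate, fw_bar_succ, hfw3456]
        ring
      rw [alphaV_replicate_append_pos i _ _ _ (fw_bar_self i), h23456, hfw23456]
      have : (m : ℤ) + (W1 - W - m) = W1 - W := by ring
      rw [this, max_eq_right hfwx]
  · -- i = n
    subst heq
    have hW1 : wt (i+1) x = 0 := hwx1 rfl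
    have hB : 0 ≤ alphaV i x + wt i x + m := by have := hm i hi; linarith
    rw [rep_filter_eq x m i hi] at hwf haf
    constructor
    · rw [hwf]
      simp only [wt_append, wt_replicate, Prod.ext_iff]
      simp
      omega
    · rw [haf]
      set A := alphaV i x with hAdef
      set W := wt i x with hWdef
      have hfwx : -W ≤ A := by have := fw_le_alphaV i x; rw [fw] at this; omega
      have h6 : alphaV i (List.replicate A.toNat ((true, i) : Γ)) = A := by
        rw [← List.append_nil (List.replicate A.toNat ((true, i) : Γ)),
          alphaV_replicate_append_pos i _ _ _ (fw_bar_self i), fw_nil, alphaV_nil]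
        rw [Int.toNat_of_nonneg hA]
        omega
      have h56 : alphaV i (List.replicate (A + W + m).toNat ((false, i) : Γ) ++
          List.replicate A.toNat ((true, i) : Γ)) = A := by
        rw [alphaV_replicate_append_nonpos i _ _ _ (by rw [fw_unbar_self]; omega), h6]
      have hfw56 : fw i (List.replicate (A + W + m).toNat ((false, i) : Γ) ++
          List.replicate A.toNat ((true, i) : Γ)) = -W - m := by
        rw [fw_append, fw_replicate, fw_replicate, fw_unbar_self, fw_bar_self,
          Int.toNat_of_nonneg hB, Int.toNat_of_nonneg hA]
        ring
      rw [alphaV_replicate_append_pos i _ _ _ (fw_bar_self i), h56, hfw56]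
      have : (m : ℤ) + (-W - m) = -W := by ring
      rw [this, max_eq_right hfwx]
  · -- n < i
    rw [rep_filter_gt x m n i hgt] at hwf haf
    constructor
    · rw [hwf, wt_nil]
      exact (wt_eq_zero_of_not_mem _ _ (fun l hl => by have := hn l hl; omega)).symm
    · rw [haf, alphaV_nil]
      exact (alphaV_eq_zero_of_not_mem _ _ (fun l hl => by have := hn l hl; omega)).symm

end RepSpec

lemma fw_single_other (i j : ℕ) (b : Bool) (h1 : j ≠ i) (h2 : j ≠ i + 1) :
    fw i [((b, j) : Γ)] = 0 := by
  have w1 : wt i [((b, j) : Γ)] = 0 :=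
    wt_eq_zero_of_not_mem _ _ (by intro l hl; simp at hl; subst hl; exact h1)
  have w2 : wt (i+1) [((b, j) : Γ)] = 0 :=
    wt_eq_zero_of_not_mem _ _ (by intro l hl; simp at hl; subst hl; exact h2)
  simp [fw, w1, w2]

lemma exists_letter_bound (x : List Γ) : ∃ B, ∀ l ∈ x, l.2 ≤ B := by
  induction x with
  | nil => exact ⟨0, by simp⟩
  | cons l y ih =>
    obtain ⟨B, hB⟩ := ih
    exact ⟨max B l.2, by
      intro l' hl'
      rcases List.mem_cons.1 hl' with h | h
      · subst h; exact le_max_right _ _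
      · exact le_trans (hB l' h) (le_max_left _ _)⟩







lemma act_nil (o : Option (ℕ → ℕ)) : act [] o = o := rfl

lemma act_cons (l : Γ) (y : List Γ) (o : Option (ℕ → ℕ)) :
    act (l :: y) o = if l.1 then D l.2 (act y o) else U l.2 (act y o) := rfl

/-- the validity condition -/
def vcond (x : List Γ) (c : ℕ → ℕ) : Prop :=
  ∀ i, 1 ≤ i → alphaV i x ≤ (c i : ℤ) - c (i + 1)

/-- the intended result of acting by `x` on `c` -/
noncomputable def res (x : List Γ) (c : ℕ → ℕ) : ℕ → ℕ :=
  fun i => ((c i : ℤ) + wt i x).toNat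

section ActLemma

variable (y : List Γ) (c : ℕ → ℕ)

lemma wt_zero_hi (hy : ∀ l ∈ y, 1 ≤ l.2) : wt 0 y = 0 :=
  wt_eq_zero_of_not_mem _ _ (fun l hl => by have := hy l hl; omega)

lemma mono_res (hc : IsPartition c) (hcond : vcond y c) :
    ∀ i, 1 ≤ i → (c (i+1) : ℤ) + wt (i+1) y ≤ (c i : ℤ) + wt i y := by
  intro i hi
  have h1 : fw i y ≤ alphaV i y := fw_le_alphaV i y
  have h2 := hcond i hi
  rw [fw] at h1
  omega

lemma nonneg_res (hy : ∀ l ∈ y, 1 ≤ l.2) (hc : IsPartition c) (hcond : vcond y c) :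
    ∀ i, 0 ≤ (c i : ℤ) + wt i y := by
  intro i
  rcases Nat.eq_zero_or_pos i with rfl | hi
  · rw [hc.2.1, wt_zero_hi y hy]; simp
  obtain ⟨N, hN⟩ := hc.2.2
  obtain ⟨B, hB⟩ := exists_letter_bound y
  have key : ∀ k, (c (i + k) : ℤ) + wt (i + k) y ≤ (c i : ℤ) + wt i y := by
    intro k
    induction k with
    | zero => simp
    | succ k ih =>
      have := mono_res y c hc hcond (i + k) (by omega)
      rw [show i + (k+1) = i + k + 1 by omega]
      omega
  have h0 : (c (i + (N + B + 1)) : ℤ) + wt (i + (N + B + 1)) y = 0 := by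
    rw [hN _ (by omega), wt_eq_zero_of_not_mem _ _ (fun l hl => by have := hB l hl; omega)]
    simp
  have := key (N + B + 1)
  omega

lemma res_coe (hy : ∀ l ∈ y, 1 ≤ l.2) (hc : IsPartition c) (hcond : vcond y c) :
    ∀ i, (res y c i : ℤ) = (c i : ℤ) + wt i y := by
  intro i
  exact Int.toNat_of_nonneg (nonneg_res y c hy hc hcond i)

lemma res_isPartition (hy : ∀ l ∈ y, 1 ≤ l.2) (hc : IsPartition c) (hcond : vcond y c) :
    IsPartition (res y c) := by
  have hcoe := res_coe y c hy hc hcond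
  refine ⟨?_, ?_, ?_⟩
  · intro i hi
    have := mono_res y c hc hcond i hi
    have h1 := hcoe i
    have h2 := hcoe (i+1)
    omega
  · have h0 := hcoe 0
    rw [hc.2.1, wt_zero_hi y hy] at h0
    omega
  · obtain ⟨N, hN⟩ := hc.2.2
    obtain ⟨B, hB⟩ := exists_letter_bound y
    refine ⟨N + B + 1, fun i hi => ?_⟩
    have h1 := hcoe i
    rw [hN _ (by omega),
      wt_eq_zero_of_not_mem _ _ (fun l hl => by have := hB l hl; omega)] at h1
    omega

end ActLemma

lemma wt_cons_false (i j : ℕ) (y : List Γ) :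
    wt i (((false, j) : Γ) :: y) = wt i y + (if j = i then 1 else 0) := by
  rw [wt_cons]
  by_cases h : j = i
  · subst h; simp; ring
  · have h1 : ((false, j) : Γ) ≠ (false, i) := by simp [h]
    have h2 : ((false, j) : Γ) ≠ (true, i) := by simp
    simp [h1, h2, h]

lemma wt_cons_true (i j : ℕ) (y : List Γ) :
    wt i (((true, j) : Γ) :: y) = wt i y - (if j = i then 1 else 0) := by
  rw [wt_cons]
  by_cases h : j = i
  · subst h; simp; ring
  · have h1 : ((true, j) : Γ) ≠ (false, i) := by simp
    have h2 : ((true, j) : Γ) ≠ (true, i) := by simp [h]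
    simp [h1, h2, h]

open scoped Classical in
lemma act_eq : ∀ (x : List Γ), (∀ l ∈ x, 1 ≤ l.2) → ∀ c, IsPartition c →
    act x (some c) = if vcond x c then some (res x c) else none := by
  intro x
  induction x with
  | nil =>
    intro _ c hc
    have hv : vcond [] c := by
      intro i hi
      rw [alphaV_nil]
      have := hc.1 i hi
      omega
    rw [act_nil, if_pos hv]
    have hr : res [] c = c := by
      funext i
      simp [res, wt_nil]
    rw [hr]
  | cons l y ih =>
    intro hx c hc
    obtain ⟨b, j⟩ := l
    have hj : 1 ≤ j := hx (b, j) List.mem_cons_self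
    have hy : ∀ l ∈ y, 1 ≤ l.2 := fun l hl => hx l (List.mem_cons_of_mem _ hl)
    rw [act_cons, ih hy c hc]
    by_cases hcy : vcond y c
    swap
    · rw [if_neg hcy]
      have hnc : ¬ vcond (((b, j) : Γ) :: y) c :=
        fun h => hcy (fun i hi => le_trans (alphaV_le i _ y) (h i hi))
      rw [if_neg hnc]
      rcases b <;> simp [D, U]
    rw [if_pos hcy]
    have hcoe : ∀ i, (res y c i : ℤ) = (c i : ℤ) + wt i y := res_coe y c hy hc hcy
    have hnn : ∀ i, 0 ≤ (c i : ℤ) + wt i y := nonneg_res y c hy hc hcy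
    have hd : IsPartition (res y c) := res_isPartition y c hy hc hcy
    set d := res y c with hddef
    obtain ⟨N, hN⟩ := hd.2.2
    rcases b
    · -- up operator u_j
      show U j (some d) = _
      have hU : U j (some d) = upFun j d := rfl
      set V : Prop := 2 ≤ j → (c j : ℤ) + wt j y + 1 ≤ (c (j-1) : ℤ) + wt (j-1) y with hVdef
      have hVcond : vcond (((false, j) : Γ) :: y) c ↔ V := by
        constructor
        · intro h hj2
          have h1 := h (j-1) (by omega)
          rw [alphaV_cons] at h1
          have h2 : fw (j-1) (((false, j) : Γ) :: y) ≤ (c (j-1) : ℤ) - c (j-1+1) :=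
            le_trans (le_max_left _ _) h1
          rw [fw_cons] at h2
          have h3 : ((false, j) : Γ) = ((false, (j-1)+1) : Γ) := by
            congr 1; omega
          rw [h3, fw_unbar_succ (j-1)] at h2
          rw [fw, show j - 1 + 1 = j by omega] at h2
          omega
        · intro hV i hi
          rw [alphaV_cons]
          have hb := hcy i hi
          apply max_le _ hb
          rw [fw_cons]
          by_cases h1 : j = i + 1
          · subst h1
            rw [fw_unbar_succ i]
            have := hV (by omega)
            rw [show i + 1 - 1 = i by omega] at this
            rw [fw]
            omega
          · have hfy : fw i y ≤ alphaV i y := fw_le_alphaV i y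
            by_cases h2 : j = i
            · subst h2; rw [fw_unbar_self]; omega
            · rw [fw_single_other i j false h2 h1]; omega
      have hiff : (1 ≤ j ∧ IsPartition (Function.update d j (d j + 1))) ↔ V := by
        constructor
        · intro ⟨_, hp⟩ hj2
          have h1 := hp.1 (j-1) (by omega)
          rw [show j - 1 + 1 = j by omega, Function.update_self,
            Function.update_of_ne (by omega : j - 1 ≠ j)] at h1
          have := hcoe j; have := hcoe (j-1)
          omega
        · intro hV
          refine ⟨hj, ?_, ?_, ?_⟩
          · intro i hi
            by_cases h1 : i + 1 = j
            · have hij : i ≠ j := by omega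
              rw [h1, Function.update_self, Function.update_of_ne hij]
              have h2 := hV (by omega)
              have h3 := hcoe j
              have h4 := hcoe (j-1)
              rw [show j - 1 = i by omega] at h2 h4
              omega
            · rw [Function.update_of_ne h1]
              by_cases h2 : i = j
              · subst h2
                rw [Function.update_self]
                have := hd.1 i hi
                omega
              · rw [Function.update_of_ne h2]
                exact hd.1 i hi
          · rw [Function.update_of_ne (by omega : (0:ℕ) ≠ j)]
            exact hd.2.1
          · refine ⟨max N (j+1), fun i hi => ?_⟩
            rw [Function.update_of_ne (by omega : i ≠ j)]
            exact hN i (by omega)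
      have hres : V → Function.update d j (d j + 1) = res (((false, j) : Γ) :: y) c := by
        intro _
        funext i
        by_cases h1 : i = j
        · subst h1
          rw [Function.update_self]
          have h2 : wt i (((false, i) : Γ) :: y) = wt i y + 1 := by
            rw [wt_cons_false]; simp
          simp only [res, h2]
          have := hcoe i; have := hnn i
          omega
        · rw [Function.update_of_ne h1]
          have h2 : wt i (((false, j) : Γ) :: y) = wt i y := by
            rw [wt_cons_false, if_neg (fun h => h1 h.symm)]; ring
          simp only [hddef, res, h2]
      rw [hU, upFun]
      by_cases hV : V
      · rw [if_pos (hiff.mpr hV), if_pos (hVcond.mpr hV), hres hV]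
      · rw [if_neg (fun h => hV (hiff.mp h)), if_neg (fun h => hV (hVcond.mp h))]
    · -- down operator d_j
      show D j (some d) = _
      have hD : D j (some d) = downFun j d := rfl
      set V : Prop := (c (j+1) : ℤ) + wt (j+1) y + 1 ≤ (c j : ℤ) + wt j y with hVdef
      have hVcond : vcond (((true, j) : Γ) :: y) c ↔ V := by
        constructor
        · intro h
          have h1 := h j hj
          rw [alphaV_cons] at h1
          have h2 : fw j (((true, j) : Γ) :: y) ≤ (c j : ℤ) - c (j+1) :=
            le_trans (le_max_left _ _) h1
          rw [fw_cons, fw_bar_self, fw] at h2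
          omega
        · intro hV i hi
          rw [alphaV_cons]
          have hb := hcy i hi
          apply max_le _ hb
          rw [fw_cons]
          by_cases h1 : j = i
          · subst h1
            rw [fw_bar_self, fw]
            omega
          · have hfy : fw i y ≤ alphaV i y := fw_le_alphaV i y
            by_cases h2 : j = i + 1
            · subst h2; rw [fw_bar_succ]; omega
            · rw [fw_single_other i j true h1 h2]; omega
      have hdj1 : V → 1 ≤ d j := by
        intro hV
        have := hcoe j
        have := hnn (j+1)
        omega
      have hiff : (1 ≤ j ∧ 1 ≤ d j ∧ IsPartition (Function.update d j (d j - 1))) ↔ V := by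
        constructor
        · intro ⟨_, hdj, hp⟩
          have h1 := hp.1 j hj
          rw [Function.update_self,
            Function.update_of_ne (by omega : j + 1 ≠ j)] at h1
          have := hcoe j; have := hcoe (j+1)
          omega
        · intro hV
          refine ⟨hj, hdj1 hV, ?_, ?_, ?_⟩
          · intro i hi
            by_cases h1 : i + 1 = j
            · have hij : i ≠ j := by omega
              rw [h1, Function.update_self, Function.update_of_ne hij]
              have := hd.1 i hi
              rw [h1] at this
              omega
            · rw [Function.update_of_ne h1]
              by_cases h2 : i = j
              · subst h2
                rw [Function.update_self]
                have h3 := hcoe i; have h4 := hcoe (i+1)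
                have h5 := hdj1 hV
                omega
              · rw [Function.update_of_ne h2]
                exact hd.1 i hi
          · rw [Function.update_of_ne (by omega : (0:ℕ) ≠ j)]
            exact hd.2.1
          · refine ⟨max N (j+1), fun i hi => ?_⟩
            rw [Function.update_of_ne (by omega : i ≠ j)]
            exact hN i (by omega)
      have hres : V → Function.update d j (d j - 1) = res (((true, j) : Γ) :: y) c := by
        intro hV
        funext i
        by_cases h1 : i = j
        · subst h1
          rw [Function.update_self]
          have h2 : wt i (((true, i) : Γ) :: y) = wt i y - 1 := by
            rw [wt_cons_true]; simp
          simp only [res, h2]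
          have := hcoe i
          have := hdj1 hV
          omega
        · rw [Function.update_of_ne h1]
          have h2 : wt i (((true, j) : Γ) :: y) = wt i y := by
            rw [wt_cons_true, if_neg (fun h => h1 h.symm)]; ring
          simp only [hddef, res, h2]
      rw [hD, downFun]
      by_cases hV : V
      · rw [if_pos (hiff.mpr hV), if_pos (hVcond.mpr hV), hres hV]
      · rw [if_neg (fun h => hV (hiff.mp h)), if_neg (fun h => hV (hVcond.mp h))]

lemma rep_mem (x : List Γ) (m n : ℕ) : ∀ l ∈ rep x m n, 1 ≤ l.2 := by
  intro l hl
  rw [show rep x m n =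
      (((List.range n).map (fun k => List.replicate m ((true, k + 1) : Γ))).flatten) ++
      (((List.range n).reverse.map (fun k =>
        List.replicate ((alphaV (k + 1) x + wt (k + 1) x + m).toNat) ((false, k + 1) : Γ) ++
        List.replicate ((alphaV (k + 1) x).toNat) ((true, k + 1) : Γ))).flatten) from rfl] at hl
  rcases List.mem_append.1 hl with h | h
  · rw [List.mem_flatten] at h
    obtain ⟨L, hL, hlL⟩ := h
    rw [List.mem_map] at hL
    obtain ⟨k, _, rfl⟩ := hL
    have := List.eq_of_mem_replicate hlL
    subst this
    simp
  · rw [List.mem_flatten] at h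
    obtain ⟨L, hL, hlL⟩ := h
    rw [List.mem_map] at hL
    obtain ⟨k, _, rfl⟩ := hL
    rcases List.mem_append.1 hlL with h' | h' <;>
      (have := List.eq_of_mem_replicate h'; subst this; simp)

theorem general_representative (x : List Γ) (hx : ∀ l ∈ x, 1 ≤ l.2)
    (m n : ℕ)
    (hm : ∀ i, 1 ≤ i → -(alphaV i x + wt i x) ≤ (m : ℤ))
    (hn : ∀ l ∈ x, l.2 ≤ n) :
    (∀ i, 1 ≤ i → wt i (rep x m n) = wt i x ∧ alphaV i (rep x m n) = alphaV i x) ∧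
    (∀ c : ℕ → ℕ, IsPartition c → act (rep x m n) (some c) = act x (some c)) := by
  have hspec := rep_spec x m n hm hn
  refine ⟨hspec, ?_⟩
  intro c hc
  rw [act_eq (rep x m n) (rep_mem x m n) c hc, act_eq x hx c hc]
  have hvc : vcond (rep x m n) c ↔ vcond x c := by
    constructor <;> intro h i hi
    · rw [← (hspec i hi).2]; exact h i hi
    · rw [(hspec i hi).2]; exact h i hi
  have hres : res (rep x m n) c = res x c := by
    funext i
    rcases Nat.eq_zero_or_pos i with rfl | hi
    · simp only [res, wt_zero_hi (rep x m n) (rep_mem x m n), wt_zero_hi x hx]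
    · simp only [res, (hspec i hi).1]
  by_cases h : vcond x c
  · rw [if_pos h, if_pos (hvc.mpr h), hres]
  · rw [if_neg h, if_neg (fun h' => h (hvc.mp h'))]
end

section
/- Fix t > 1 and ρ ≥ 0. Let x be a word in {t, t̄}. Then u_x annihilates every partition λ with λ'_{t-1} − λ'_{t+1} = ρ if and only if α_{t-1}(x) + α_t(x) > ρ. -/
section Aux

lemma up_iff {t : ℕ} (ht : 1 < t) {d : ℕ → ℕ} (hd : IsPartition d) :
    IsPartition (Function.update d t (d t + 1)) ↔ d t + 1 ≤ d (t - 1) := by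
  constructor
  · intro h
    have h1 := h.1 (t - 1) (by omega)
    rw [show t - 1 + 1 = t by omega] at h1
    rwa [Function.update_self, Function.update_of_ne (by omega)] at h1
  · intro h
    obtain ⟨hmono, h0, N, hN⟩ := hd
    refine ⟨?_, ?_, ⟨max N (t + 1), ?_⟩⟩
    · intro i hi
      rcases eq_or_ne i t with rfl | e2
      · rw [Function.update_of_ne (by omega), Function.update_self]
        have := hmono i hi
        omega
      · rcases eq_or_ne (i + 1) t with e1 | e1
        · rw [e1, Function.update_self, Function.update_of_ne e2]
          have hi1 : i = t - 1 := by omega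
          rw [hi1]
          omega
        · rw [Function.update_of_ne e1, Function.update_of_ne e2]
          exact hmono i hi
    · rw [Function.update_of_ne (by omega)]; exact h0
    · intro i hi
      rw [Function.update_of_ne (by omega)]
      exact hN i (by omega)

lemma down_iff {t : ℕ} (ht : 1 < t) {d : ℕ → ℕ} (hd : IsPartition d) (h1 : 1 ≤ d t) :
    IsPartition (Function.update d t (d t - 1)) ↔ d (t + 1) ≤ d t - 1 := by
  constructor
  · intro h
    have h2 := h.1 t (by omega)
    rwa [Function.update_self, Function.update_of_ne (by omega)] at h2
  · intro h
    obtain ⟨hmono, h0, N, hN⟩ := hd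
    refine ⟨?_, ?_, ⟨max N (t + 1), ?_⟩⟩
    · intro i hi
      rcases eq_or_ne i t with rfl | e2
      · rw [Function.update_of_ne (by omega), Function.update_self]
        exact h
      · rcases eq_or_ne (i + 1) t with e1 | e1
        · rw [e1, Function.update_self, Function.update_of_ne e2]
          have h3 := hmono (t - 1) (by omega)
          rw [show t - 1 + 1 = t by omega] at h3
          have hi1 : i = t - 1 := by omega
          rw [hi1]
          omega
        · rw [Function.update_of_ne e1, Function.update_of_ne e2]
          exact hmono i hi
    · rw [Function.update_of_ne (by omega)]; exact h0
    · intro i hi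
      rw [Function.update_of_ne (by omega)]
      exact hN i (by omega)

lemma wt_eq_zero {t : ℕ} {x : List Γ} (hx : ∀ l ∈ x, l.2 = t) {j : ℕ} (hj : j ≠ t) :
    wt j x = 0 := by
  have h1 : x.count ((false, j) : Γ) = 0 := List.count_eq_zero.mpr (fun h => hj (hx _ h))
  have h2 : x.count ((true, j) : Γ) = 0 := List.count_eq_zero.mpr (fun h => hj (hx _ h))
  simp [wt, h1, h2]

lemma le_foldr_max {l : List ℤ} {a : ℤ} (h : a ∈ l) : a ≤ l.foldr max 0 := by
  induction l with
  | nil => simp at h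
  | cons b l ih =>
    rcases List.mem_cons.mp h with rfl | h
    · exact le_max_left _ _
    · exact le_trans (ih h) (le_max_right _ _)

lemma foldr_max_mem (l : List ℤ) : l.foldr max 0 = 0 ∨ l.foldr max 0 ∈ l := by
  induction l with
  | nil => left; rfl
  | cons b l ih =>
    rcases max_choice b (l.foldr max 0) with h | h
    · right; rw [List.foldr_cons, h]; exact List.mem_cons_self
    · rcases ih with h0 | hm
      · left; rw [List.foldr_cons, h, h0]
      · right; rw [List.foldr_cons, h]; exact List.mem_cons_of_mem _ hm

lemma alphaV_exists (i : ℕ) (x : List Γ) :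
    ∃ s ∈ x.tails, wt (i + 1) s - wt i s = alphaV i x := by
  rcases foldr_max_mem (x.tails.map (fun s => wt (i + 1) s - wt i s)) with h | h
  · refine ⟨[], by simp, ?_⟩
    rw [alphaV, h]; simp [wt]
  · rcases List.mem_map.mp h with ⟨s, hs, hval⟩
    exact ⟨s, hs, hval⟩

lemma le_alphaV {i : ℕ} {x s : List Γ} (hs : s ∈ x.tails) :
    wt (i + 1) s - wt i s ≤ alphaV i x :=
  le_foldr_max (List.mem_map_of_mem hs)

lemma key {t : ℕ} (ht : 1 < t) :
    ∀ x : List Γ, (∀ l ∈ x, l.2 = t) → ∀ c : ℕ → ℕ, IsPartition c →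
      ((∃ s ∈ x.tails, ((c t : ℤ) + wt t s < c (t + 1)) ∨ ((c (t - 1) : ℤ) < (c t : ℤ) + wt t s)) →
        act x (some c) = none) ∧
      ((∀ s ∈ x.tails, (c (t + 1) : ℤ) ≤ (c t : ℤ) + wt t s ∧ (c t : ℤ) + wt t s ≤ c (t - 1)) →
        ∃ d, act x (some c) = some d ∧ IsPartition d ∧ d (t - 1) = c (t - 1) ∧
          d (t + 1) = c (t + 1) ∧ (d t : ℤ) = c t + wt t x) := by
  intro x
  induction x with
  | nil =>
    intro _ c hc
    have h1 : c (t + 1) ≤ c t := hc.1 t (by omega)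
    have h2 : c t ≤ c (t - 1) := by
      have := hc.1 (t - 1) (by omega)
      rwa [show t - 1 + 1 = t by omega] at this
    constructor
    · rintro ⟨s, hs, hbad⟩
      simp only [List.tails] at hs
      simp at hs
      subst hs
      simp only [wt, List.count_nil] at hbad
      omega
    · intro _
      exact ⟨c, rfl, hc, rfl, rfl, by simp [wt]⟩
  | cons a x ih =>
    intro hx c hc
    have hat : a.2 = t := hx a (List.mem_cons_self)
    have hx' : ∀ l ∈ x, l.2 = t := fun l hl => hx l (List.mem_cons_of_mem _ hl)
    obtain ⟨ihBad, ihGood⟩ := ih hx' c hc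
    have hact : act (a :: x) (some c)
        = (if a.1 then D a.2 (act x (some c)) else U a.2 (act x (some c))) := rfl
    by_cases hB : ∃ s ∈ x.tails,
        ((c t : ℤ) + wt t s < c (t + 1)) ∨ ((c (t - 1) : ℤ) < (c t : ℤ) + wt t s)
    · have hnone := ihBad hB
      constructor
      · intro _
        rw [hact, hnone]
        cases a.1 <;> simp [U, D]
      · intro hg
        obtain ⟨s, hs, hbad⟩ := hB
        have := hg s (by rw [List.tails_cons]; exact List.mem_cons_of_mem _ hs)
        omega
    · push_neg at hB
      obtain ⟨d, hd_act, hd_part, hd1, hd2, hd3⟩ := ihGood hB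
      have hgx := hB x ((List.mem_tails _ _).mpr (List.suffix_refl x))
      obtain ⟨b, j⟩ := a
      simp only at hat
      have hat' : t = j := hat.symm
      subst hat'
      cases b with
      | false =>
        have hwt1 : wt t (((false, t) : Γ) :: x) = wt t x + 1 := by
          rw [wt, wt, List.count_cons_self, List.count_cons_of_ne (by simp)]
          push_cast; ring
        have hstep : act (((false, t) : Γ) :: x) (some c) = upFun t d := by
          rw [hact, hd_act]; simp [U]
        have hcond : upFun t d
            = if d t + 1 ≤ d (t - 1) then some (Function.update d t (d t + 1)) else none := by
          by_cases h : d t + 1 ≤ d (t - 1)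
          · rw [upFun, if_pos ⟨by omega, (up_iff ht hd_part).mpr h⟩, if_pos h]
          · rw [upFun, if_neg, if_neg h]
            rintro ⟨-, hp⟩
            exact h ((up_iff ht hd_part).mp hp)
        constructor
        · rintro ⟨s, hs2, hbad⟩
          rw [List.tails_cons] at hs2
          rcases List.mem_cons.mp hs2 with rfl | hs2
          · rw [hwt1] at hbad
            have hne : ¬ (d t + 1 ≤ d (t - 1)) := by
              intro hle
              have hle' : (d t : ℤ) + 1 ≤ (d (t - 1) : ℤ) := by exact_mod_cast hle
              rw [hd3, hd1] at hle'
              omega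
            rw [hstep, hcond, if_neg hne]
          · have := hB s hs2
            omega
        · intro hg
          have hgf := hg _ ((List.mem_tails _ _).mpr (List.suffix_refl _))
          rw [hwt1] at hgf
          have hle : d t + 1 ≤ d (t - 1) := by
            have h2 : (d t : ℤ) + 1 ≤ (d (t - 1) : ℤ) := by rw [hd3, hd1]; omega
            exact_mod_cast h2
          refine ⟨Function.update d t (d t + 1), by rw [hstep, hcond, if_pos hle],
            (up_iff ht hd_part).mpr hle, ?_, ?_, ?_⟩
          · rw [Function.update_of_ne (by omega)]; exact hd1
          · rw [Function.update_of_ne (by omega)]; exact hd2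
          · rw [Function.update_self, hwt1]
            push_cast
            omega
      | true =>
        have hwt2 : wt t (((true, t) : Γ) :: x) = wt t x - 1 := by
          rw [wt, wt, List.count_cons_self, List.count_cons_of_ne (by simp)]
          push_cast; ring
        have hstep : act (((true, t) : Γ) :: x) (some c) = downFun t d := by
          rw [hact, hd_act]; simp [D]
        have hcond : downFun t d
            = if d (t + 1) + 1 ≤ d t then some (Function.update d t (d t - 1)) else none := by
          by_cases h : d (t + 1) + 1 ≤ d t
          · rw [downFun,
              if_pos ⟨by omega, by omega, (down_iff ht hd_part (by omega)).mpr (by omega)⟩,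
              if_pos h]
          · rw [downFun, if_neg, if_neg h]
            rintro ⟨-, h1, hp⟩
            have := (down_iff ht hd_part h1).mp hp
            omega
        constructor
        · rintro ⟨s, hs2, hbad⟩
          rw [List.tails_cons] at hs2
          rcases List.mem_cons.mp hs2 with rfl | hs2
          · rw [hwt2] at hbad
            have hne : ¬ (d (t + 1) + 1 ≤ d t) := by
              intro hle
              have hle' : (d (t + 1) : ℤ) + 1 ≤ (d t : ℤ) := by exact_mod_cast hle
              rw [hd3, hd2] at hle'
              omega
            rw [hstep, hcond, if_neg hne]
          · have := hB s hs2
            omega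
        · intro hg
          have hgf := hg _ ((List.mem_tails _ _).mpr (List.suffix_refl _))
          rw [hwt2] at hgf
          have hle : d (t + 1) + 1 ≤ d t := by
            have h2 : (d (t + 1) : ℤ) + 1 ≤ (d t : ℤ) := by rw [hd3, hd2]; omega
            exact_mod_cast h2
          refine ⟨Function.update d t (d t - 1), by rw [hstep, hcond, if_pos hle],
            (down_iff ht hd_part (by omega)).mpr (by omega), ?_, ?_, ?_⟩
          · rw [Function.update_of_ne (by omega)]; exact hd1
          · rw [Function.update_of_ne (by omega)]; exact hd2
          · rw [Function.update_self, hwt2]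
            omega

end Aux

theorem annihilates_chain_iff (t : ℕ) (ht : 1 < t) (ρ : ℕ) (x : List Γ)
    (hx : ∀ l ∈ x, l.2 = t) :
    (∀ c : ℕ → ℕ, IsPartition c → (c (t - 1) : ℤ) - (c (t + 1) : ℤ) = ρ →
        act x (some c) = none) ↔
      (ρ : ℤ) < alphaV (t - 1) x + alphaV t x := by
  have ht1 : t - 1 + 1 = t := by omega
  have hA1le : ∀ s ∈ x.tails, wt t s ≤ alphaV (t - 1) x := by
    intro s hs
    have hsub : ∀ l ∈ s, l.2 = t := fun l hl => hx l (((List.mem_tails _ _).mp hs).subset hl)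
    have hz : wt (t - 1) s = 0 := wt_eq_zero hsub (by omega : t - 1 ≠ t)
    have h := le_alphaV (i := t - 1) hs
    rwa [ht1, hz, sub_zero] at h
  have hA2le : ∀ s ∈ x.tails, -(wt t s) ≤ alphaV t x := by
    intro s hs
    have hsub : ∀ l ∈ s, l.2 = t := fun l hl => hx l (((List.mem_tails _ _).mp hs).subset hl)
    have hz : wt (t + 1) s = 0 := wt_eq_zero hsub (by omega : t + 1 ≠ t)
    have h := le_alphaV (i := t) hs
    rwa [hz, zero_sub] at h
  have hA1ex : ∃ s ∈ x.tails, wt t s = alphaV (t - 1) x := by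
    obtain ⟨s, hs, hv⟩ := alphaV_exists (t - 1) x
    have hsub : ∀ l ∈ s, l.2 = t := fun l hl => hx l (((List.mem_tails _ _).mp hs).subset hl)
    have hz : wt (t - 1) s = 0 := wt_eq_zero hsub (by omega : t - 1 ≠ t)
    refine ⟨s, hs, ?_⟩
    rwa [ht1, hz, sub_zero] at hv
  have hA2ex : ∃ s ∈ x.tails, -(wt t s) = alphaV t x := by
    obtain ⟨s, hs, hv⟩ := alphaV_exists t x
    have hsub : ∀ l ∈ s, l.2 = t := fun l hl => hx l (((List.mem_tails _ _).mp hs).subset hl)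
    have hz : wt (t + 1) s = 0 := wt_eq_zero hsub (by omega : t + 1 ≠ t)
    refine ⟨s, hs, ?_⟩
    rwa [hz, zero_sub] at hv
  constructor
  · intro hann
    by_contra hcon
    push_neg at hcon
    have hα2 : 0 ≤ alphaV t x := alphaV_nonneg t x
    have hα1 : 0 ≤ alphaV (t - 1) x := alphaV_nonneg _ x
    set s0 : ℕ := (alphaV t x).toNat with hs0def
    have hs0' : (s0 : ℤ) = alphaV t x := Int.toNat_of_nonneg hα2
    have hs0ρ : (s0 : ℤ) ≤ ρ := by rw [hs0']; omega
    set c : ℕ → ℕ := fun i => if i = 0 then 0 else if i ≤ t - 1 then ρ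
      else if i = t then s0 else 0 with hcdef
    have hct : c t = s0 := by simp only [hcdef]; split_ifs <;> omega
    have hct1 : c (t - 1) = ρ := by simp only [hcdef]; split_ifs <;> omega
    have hct2 : c (t + 1) = 0 := by simp only [hcdef]; split_ifs <;> omega
    have hcp : IsPartition c := by
      refine ⟨?_, by simp [hcdef], ⟨t + 1, ?_⟩⟩
      · intro i hi
        simp only [hcdef]
        split_ifs <;> omega
      · intro i hi
        simp only [hcdef]
        split_ifs <;> omega
    have hwidth : (c (t - 1) : ℤ) - (c (t + 1) : ℤ) = ρ := by rw [hct1, hct2]; simp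
    have hgoodness : ∀ s ∈ x.tails,
        (c (t + 1) : ℤ) ≤ (c t : ℤ) + wt t s ∧ (c t : ℤ) + wt t s ≤ c (t - 1) := by
      intro s hs
      have h1 := hA1le s hs
      have h2 := hA2le s hs
      rw [hct, hct1, hct2]
      constructor <;> push_cast <;> omega
    obtain ⟨d, hd, -⟩ := (key ht x hx c hcp).2 hgoodness
    rw [hann c hcp hwidth] at hd
    cases hd
  · intro h c hc hw
    obtain ⟨s1, hs1, hv1⟩ := hA1ex
    obtain ⟨s2, hs2, hv2⟩ := hA2ex
    apply (key ht x hx c hc).1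
    by_cases hcase : (c (t - 1) : ℤ) < (c t : ℤ) + wt t s1
    · exact ⟨s1, hs1, Or.inr hcase⟩
    · exact ⟨s2, hs2, Or.inl (by omega)⟩
end
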